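/- Let R := ℂ[z₁,z₂,z₃,z₄]/(z₁z₄ − z₂z₃) be the coordinate ring of the affine quadric cone and let p ⊂ R be the ideal generated by the images of z₁ and z₂. Then p is a prime ideal, and for every n ≥ 1 the ordinary power pⁿ equals the n-th symbolic power of p: for every f ∈ R, if there exists s ∈ R with s ∉ p and s·f ∈ pⁿ, then f ∈ pⁿ (equivalently, pⁿ is a p-primary ideal). -/

import Mathlib

noncomputable section
set_option synthInstance.maxHeartbeats 800000

open MvPolynomial

/-- The coordinate ring `R = ℂ[z₁,z₂,z₃,z₄]/(z₁z₄ − z₂z₃)` of the affine quadric cone. -/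
abbrev ConeRing : Type :=
  MvPolynomial (Fin 4) ℂ ⧸
    Ideal.span {(X 0 * X 3 - X 1 * X 2 : MvPolynomial (Fin 4) ℂ)}

/-- The ideal `p = (z₁, z₂)` of `R`, corresponding to the prime divisor
`z₁ = z₂ = 0` on the cone. -/
def pIdeal : Ideal ConeRing :=
  Ideal.span {Ideal.Quotient.mk _ (X 0), Ideal.Quotient.mk _ (X 1)}

/-! ### Auxiliary setup -/

abbrev S4 := MvPolynomial (Fin 4) ℂ

/-- The weight function giving `z₁, z₂` weight `1` and `z₃, z₄` weight `0`. -/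
def wt : Fin 4 → ℕ := ![1, 1, 0, 0]

local notation "Cw" => weightedHomogeneousComponent wt

lemma weight_wt (σ : Fin 4 →₀ ℕ) : Finsupp.weight wt σ = σ 0 + σ 1 := by
  rw [Finsupp.weight_apply, Finsupp.sum_fintype]
  · simp [Fin.sum_univ_four, wt]
  · intro i; simp

/-- The ideal `(z₁z₄ - z₂z₃)` upstairs. -/
def Iq : Ideal S4 := Ideal.span {X 0 * X 3 - X 1 * X 2}

/-- The ideal `(z₁, z₂)` upstairs. -/
def qId : Ideal S4 := Ideal.span {X 0, X 1}

/-! ### Weighted homogeneous components of products -/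

lemma comp_mul_hom {a : ℕ} {p : S4} (hp : p.IsWeightedHomogeneous wt a) (q : S4) (k : ℕ) :
    Cw (a + k) (p * q) = p * Cw k q := by
  ext σ
  rw [coeff_weightedHomogeneousComponent, coeff_mul, coeff_mul]
  split_ifs with h
  · refine Finset.sum_congr rfl fun x hx => ?_
    rw [coeff_weightedHomogeneousComponent]
    by_cases hc : coeff x.1 p = 0
    · simp [hc]
    · have h1 : Finsupp.weight wt x.1 = a := hp hc
      have hx' : x.1 + x.2 = σ := Finset.HasAntidiagonal.mem_antidiagonal.mp hx
      have h2 : Finsupp.weight wt x.2 = k := by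
        have := congrArg (Finsupp.weight wt) hx'
        rw [map_add, h1, h] at this
        omega
      rw [if_pos h2]
  · refine (Finset.sum_eq_zero fun x hx => ?_).symm
    rw [coeff_weightedHomogeneousComponent]
    by_cases hc : coeff x.1 p = 0
    · simp [hc]
    · have h1 : Finsupp.weight wt x.1 = a := hp hc
      have hx' : x.1 + x.2 = σ := Finset.HasAntidiagonal.mem_antidiagonal.mp hx
      rw [if_neg, mul_zero]
      intro h2
      exact h (by rw [← hx', map_add, h1, h2])

lemma comp_mul_hom_lt {a : ℕ} {p : S4} (hp : p.IsWeightedHomogeneous wt a) (q : S4) {k : ℕ}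
    (hk : k < a) : Cw k (p * q) = 0 := by
  ext σ
  rw [coeff_weightedHomogeneousComponent, coeff_zero]
  split_ifs with h
  · rw [coeff_mul]
    refine Finset.sum_eq_zero fun x hx => ?_
    by_cases hc : coeff x.1 p = 0
    · simp [hc]
    · have h1 : Finsupp.weight wt x.1 = a := hp hc
      have hx' : x.1 + x.2 = σ := Finset.HasAntidiagonal.mem_antidiagonal.mp hx
      have := congrArg (Finsupp.weight wt) hx'
      rw [map_add, h1, h] at this
      omega
  · rfl

lemma sum_comps (s : S4) :
    ∑ m ∈ (weightedHomogeneousComponent_finsupp (w := wt) s).toFinset, Cw m s = s := by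
  rw [← finsum_eq_sum _ (weightedHomogeneousComponent_finsupp s),
    sum_weightedHomogeneousComponent]

lemma comp_zero_mul (p q : S4) : Cw 0 (p * q) = Cw 0 p * Cw 0 q := by
  classical
  set T := (weightedHomogeneousComponent_finsupp (w := wt) p).toFinset with hT
  have hcongr := congrArg (fun x => Cw 0 (x * q)) (sum_comps p)
  rw [Finset.sum_mul, map_sum] at hcongr
  rw [← hcongr]
  have h0 : Cw 0 (Cw 0 p * q) = Cw 0 p * Cw 0 q := by
    have := comp_mul_hom (weightedHomogeneousComponent_isWeightedHomogeneous 0 p) q 0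
    simpa using this
  rw [Finset.sum_eq_single 0]
  · exact h0
  · intro m _ hm0
    exact comp_mul_hom_lt (weightedHomogeneousComponent_isWeightedHomogeneous m p) q
      (Nat.pos_of_ne_zero hm0)
  · intro h0T
    have : Cw 0 p = 0 := by
      by_contra hne
      exact h0T ((Set.Finite.mem_toFinset _).mpr hne)
    simp [this]

/-! ### Membership characterisation of powers of `qId` -/

def Wn (n : ℕ) : Ideal S4 where
  carrier := {F | ∀ σ ∈ F.support, n ≤ σ 0 + σ 1}
  zero_mem' := by simp
  add_mem' := by
    intro a b ha hb σ hσ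
    rcases Finset.mem_union.mp (MvPolynomial.support_add hσ) with h | h
    · exact ha σ h
    · exact hb σ h
  smul_mem' := by
    intro c F hF σ hσ
    rw [smul_eq_mul] at hσ
    obtain ⟨τ, hτ, ρ, hρ, rfl⟩ := Finset.mem_add.mp (MvPolynomial.support_mul _ _ hσ)
    have := hF ρ hρ
    simp only [Finsupp.add_apply]
    omega

lemma qpow_le_Wn (n : ℕ) : qId ^ n ≤ Wn n := by
  induction n with
  | zero => intro F _ σ _; simp
  | succ n ih =>
      rw [pow_succ]
      refine Ideal.mul_le.mpr fun f hf g hg => ?_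
      intro σ hσ
      obtain ⟨τ, hτ, ρ, hρ, rfl⟩ := Finset.mem_add.mp (MvPolynomial.support_mul _ _ hσ)
      have h1 := ih hf τ hτ
      have h2 : 1 ≤ ρ 0 + ρ 1 := by
        have hle : qId ≤ Wn 1 := by
          rw [qId, Ideal.span_le]
          rintro x (rfl | rfl) <;>
            · intro σ hσ
              rw [MvPolynomial.support_X] at hσ
              simp only [Finset.mem_singleton] at hσ
              subst hσ
              simp
        exact hle hg ρ hρ
      simp only [Finsupp.add_apply]
      omega

lemma mem_qpow {n : ℕ} {F : S4} : F ∈ qId ^ n ↔ ∀ σ ∈ F.support, n ≤ σ 0 + σ 1 := by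
  constructor
  · exact fun h => qpow_le_Wn n h
  · intro h
    have hsp : F ∈ Ideal.span ((fun d => monomial d (1 : ℂ)) ''
        {d : Fin 4 →₀ ℕ | n ≤ d 0 + d 1}) := by
      rw [mem_ideal_span_monomial_image]
      exact fun σ hσ => ⟨σ, h σ hσ, le_rfl⟩
    refine Ideal.span_le.mpr ?_ hsp
    rintro x ⟨d, hd, rfl⟩
    have hX01 : (X 0 : S4) ^ d 0 * X 1 ^ d 1 ∈ qId ^ n := by
      have h1 : (X 0 : S4) ^ d 0 * X 1 ^ d 1 ∈ qId ^ (d 0 + d 1) := by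
        rw [pow_add]
        exact Ideal.mul_mem_mul
          (Ideal.pow_mem_pow (Ideal.subset_span (by simp)) _)
          (Ideal.pow_mem_pow (Ideal.subset_span (by simp)) _)
      exact Ideal.pow_le_pow_right hd h1
    have hd4 : d = (Finsupp.single 0 (d 0) + Finsupp.single 1 (d 1)) +
        (Finsupp.single 2 (d 2) + Finsupp.single 3 (d 3)) := by
      ext i; fin_cases i <;> simp [Finsupp.single_apply]
    have heq : (monomial d (1 : ℂ) : S4) =
        (X 0 ^ d 0 * X 1 ^ d 1) * (X 2 ^ d 2 * X 3 ^ d 3) := by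
      conv_lhs => rw [hd4]
      simp [X_pow_eq_monomial, monomial_mul]
    show (monomial d (1 : ℂ) : S4) ∈ _
    rw [heq]
    exact Ideal.mul_mem_right _ _ hX01

lemma mem_qpow_iff_comp {n : ℕ} {F : S4} : F ∈ qId ^ n ↔ ∀ k < n, Cw k F = 0 := by
  rw [mem_qpow]
  constructor
  · intro h k hk
    apply weightedHomogeneousComponent_eq_zero'
    intro d hd
    have := h d hd
    rw [weight_wt]
    omega
  · intro h σ hσ
    by_contra hlt
    push_neg at hlt
    have hk := h (σ 0 + σ 1) hlt
    have hcf : coeff σ (Cw (σ 0 + σ 1) F) = coeff σ F := by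
      rw [coeff_weightedHomogeneousComponent, if_pos (weight_wt σ)]
    rw [hk, coeff_zero] at hcf
    exact (mem_support_iff.mp hσ) hcf.symm

/-! ### Homogeneity and primality of the defining equation -/

lemma gq_hom : (X 0 * X 3 - X 1 * X 2 : S4).IsWeightedHomogeneous wt 1 := by
  have h03 : (X 0 * X 3 : S4).IsWeightedHomogeneous wt 1 := by
    have := (isWeightedHomogeneous_X ℂ wt 0).mul (isWeightedHomogeneous_X ℂ wt 3)
    simpa [wt] using this
  have h12 : (X 1 * X 2 : S4).IsWeightedHomogeneous wt 1 := by
    have := (isWeightedHomogeneous_X ℂ wt 1).mul (isWeightedHomogeneous_X ℂ wt 2)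
    simpa [wt] using this
  rw [← mem_weightedHomogeneousSubmodule] at h03 h12 ⊢
  exact sub_mem h03 h12

abbrev A3 := MvPolynomial (Fin 3) ℂ

lemma prime_X0 (n : ℕ) : Prime (X 0 : MvPolynomial (Fin (n + 1)) ℂ) := by
  rw [← MulEquiv.prime_iff (MvPolynomial.finSuccEquiv ℂ n).toRingEquiv.toMulEquiv]
  have : (MvPolynomial.finSuccEquiv ℂ n).toRingEquiv.toMulEquiv (X 0) = Polynomial.X := by
    simp [MvPolynomial.finSuccEquiv_X_zero]
  rw [this]
  exact Polynomial.prime_X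

lemma prime_X2 : Prime (X 2 : A3) := by
  rw [← MulEquiv.prime_iff (MvPolynomial.renameEquiv ℂ (Equiv.swap (0 : Fin 3) 2)).toRingEquiv.toMulEquiv]
  have : (MvPolynomial.renameEquiv ℂ (Equiv.swap (0 : Fin 3) 2)).toRingEquiv.toMulEquiv
      (X 2 : A3) = X 0 := by
    simp [MvPolynomial.renameEquiv_apply, MvPolynomial.rename_X]
  rw [this]
  exact prime_X0 2

lemma X2_not_dvd : ¬ (X 2 : A3) ∣ X 0 * X 1 := by
  intro h
  rcases prime_X2.dvd_mul.mp h with h | h <;> simpa using (MvPolynomial.X_dvd_X).mp h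

set_option maxHeartbeats 800000 in
lemma prime_P : Prime (Polynomial.C (X 2 : A3) * Polynomial.X - Polynomial.C (X 0 * X 1)) := by
  set c : A3 := X 2 with hc
  set d : A3 := X 0 * X 1 with hd
  set P : Polynomial A3 := Polynomial.C c * Polynomial.X - Polynomial.C d with hP
  have hc0 : c ≠ 0 := MvPolynomial.X_ne_zero 2
  have hdeg : P.natDegree = 1 := by
    rw [hP, sub_eq_add_neg, ← Polynomial.C_neg]
    exact Polynomial.natDegree_linear hc0
  have hP0 : P ≠ 0 := fun h => by simp [h] at hdeg
  have key : ∀ u v : Polynomial A3, P = u * v → u.natDegree = 0 → IsUnit u := by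
    intro u v huv hu
    obtain ⟨a, rfl⟩ := Polynomial.natDegree_eq_zero.mp hu
    have hdvd_c : a ∣ c := by
      refine ⟨v.coeff 1, ?_⟩
      have := congrArg (fun p => Polynomial.coeff p 1) huv
      simpa [hP, Polynomial.coeff_C_mul] using this
    have hdvd_d : a ∣ d := by
      refine ⟨-(v.coeff 0), ?_⟩
      have := congrArg (fun p => Polynomial.coeff p 0) huv
      simp [hP, Polynomial.coeff_C_mul] at this
      rw [mul_neg, ← this, neg_neg]
    obtain ⟨b, hb⟩ := hdvd_c
    rcases (prime_X2.irreducible).isUnit_or_isUnit hb with h | h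
    · exact Polynomial.isUnit_C.mpr h
    · exfalso
      apply X2_not_dvd
      have : c ∣ a := ⟨(h.unit⁻¹ : _), by rw [hb, mul_assoc, IsUnit.mul_val_inv, mul_one]⟩
      exact this.trans hdvd_d
  rw [← UniqueFactorizationMonoid.irreducible_iff_prime]
  constructor
  · intro h
    have := Polynomial.natDegree_eq_zero_of_isUnit h
    omega
  · intro u v huv
    have hu0 : u ≠ 0 := fun h => hP0 (by rw [huv, h, zero_mul])
    have hv0 : v ≠ 0 := fun h => hP0 (by rw [huv, h, mul_zero])
    have hsum : u.natDegree + v.natDegree = 1 := by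
      rw [← Polynomial.natDegree_mul hu0 hv0, ← huv, hdeg]
    rcases Nat.eq_zero_or_pos u.natDegree with h | h
    · exact Or.inl (key u v huv h)
    · exact Or.inr (key v u (by rw [huv, mul_comm]) (by omega))

lemma prime_gq : Prime (X 0 * X 3 - X 1 * X 2 : S4) := by
  rw [← MulEquiv.prime_iff (MvPolynomial.finSuccEquiv ℂ 3).toRingEquiv.toMulEquiv]
  have : (MvPolynomial.finSuccEquiv ℂ 3).toRingEquiv.toMulEquiv
      (X 0 * X 3 - X 1 * X 2 : S4) =
      Polynomial.C (X 2 : A3) * Polynomial.X - Polynomial.C (X 0 * X 1) := by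
    show (MvPolynomial.finSuccEquiv ℂ 3) (X 0 * X 3 - X 1 * X 2 : S4) = _
    have h1 : (1 : Fin 4) = Fin.succ 0 := rfl
    have h2 : (2 : Fin 4) = Fin.succ 1 := rfl
    have h3 : (3 : Fin 4) = Fin.succ 2 := rfl
    rw [map_sub, map_mul, map_mul, h1, h2, h3, MvPolynomial.finSuccEquiv_X_zero,
      MvPolynomial.finSuccEquiv_X_succ, MvPolynomial.finSuccEquiv_X_succ,
      MvPolynomial.finSuccEquiv_X_succ, Polynomial.C_mul]
    ring
  rw [this]
  exact prime_P

/-! ### The sup characterisation -/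

lemma memJ {n : ℕ} {F : S4} : F ∈ qId ^ n ⊔ Iq ↔ ∀ k < n, Cw k F ∈ Iq := by
  constructor
  · intro hF k hk
    obtain ⟨a, ha, b, hb, rfl⟩ := Submodule.mem_sup.mp hF
    rw [map_add]
    have h1 : Cw k a = 0 := (mem_qpow_iff_comp.mp ha) k hk
    obtain ⟨h, rfl⟩ : (X 0 * X 3 - X 1 * X 2 : S4) ∣ b := Ideal.mem_span_singleton.mp hb
    have h2 : Cw k ((X 0 * X 3 - X 1 * X 2) * h) ∈ Iq := by
      cases k with
      | zero => rw [comp_mul_hom_lt gq_hom h (by norm_num)]; exact zero_mem _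
      | succ k =>
          have hke : k + 1 = 1 + k := by omega
          rw [hke, comp_mul_hom gq_hom]
          exact Ideal.mem_span_singleton.mpr (dvd_mul_right _ _)
    rw [h1, zero_add]
    exact h2
  · intro h
    refine Submodule.mem_sup.mpr ⟨F - ∑ k ∈ Finset.range n, Cw k F, ?_,
      ∑ k ∈ Finset.range n, Cw k F, ?_, by ring⟩
    · rw [mem_qpow_iff_comp]
      intro k hk
      rw [map_sub, map_sum]
      have hsum : ∑ j ∈ Finset.range n, Cw k (Cw j F) = Cw k F := by
        rw [Finset.sum_eq_single k]
        · exact (weightedHomogeneousComponent_isWeightedHomogeneous k F).weightedHomogeneousComponent_same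
        · intro j _ hjk
          exact (weightedHomogeneousComponent_isWeightedHomogeneous j F).weightedHomogeneousComponent_ne
            k (Ne.symm hjk)
        · intro hk'
          exact absurd (Finset.mem_range.mpr hk) hk'
      rw [hsum, sub_self]
    · exact Submodule.sum_mem _ fun k hk => h k (Finset.mem_range.mp hk)

/-! ### The main lemma upstairs -/

lemma main_comp (n : ℕ) {s F : S4} (hs : Cw 0 s ∉ Iq) (h : ∀ k < n, Cw k (s * F) ∈ Iq) :
    ∀ k < n, Cw k F ∈ Iq := by
  intro k
  induction k using Nat.strong_induction_on with
  | _ k IH =>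
    intro hk
    classical
    set T := (weightedHomogeneousComponent_finsupp (w := wt) s).toFinset with hT
    by_cases h0T : (0 : ℕ) ∈ T
    · have hsplit : Cw k (s * F) = ∑ m ∈ T, Cw k (Cw m s * F) := by
        have hcongr := congrArg (fun x => Cw k (x * F)) (sum_comps s)
        rw [Finset.sum_mul, map_sum] at hcongr
        exact hcongr.symm
      have hrest : ∀ m ∈ T, m ≠ 0 → Cw k (Cw m s * F) ∈ Iq := by
        intro m _ hm0
        rcases le_or_gt m k with hmk | hmk
        · have heq : k = m + (k - m) := by omega
          rw [heq, comp_mul_hom (weightedHomogeneousComponent_isWeightedHomogeneous m s)]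
          exact Ideal.mul_mem_left _ _
            (IH (k - m) (by omega) (by omega))
        · rw [comp_mul_hom_lt (weightedHomogeneousComponent_isWeightedHomogeneous m s) F hmk]
          exact zero_mem _
      have h0eq : Cw k (Cw 0 s * F) = Cw 0 s * Cw k F := by
        have := comp_mul_hom (weightedHomogeneousComponent_isWeightedHomogeneous 0 s) F k
        simpa using this
      have hmem : Cw 0 s * Cw k F ∈ Iq := by
        have h1 : Cw k (s * F) ∈ Iq := h k hk
        rw [hsplit, ← Finset.add_sum_erase _ _ h0T] at h1
        have h2 : ∑ m ∈ T.erase 0, Cw k (Cw m s * F) ∈ Iq :=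
          Submodule.sum_mem _ fun m hm =>
            hrest m (Finset.mem_of_mem_erase hm) (Finset.ne_of_mem_erase hm)
        have h3 := Submodule.sub_mem _ h1 h2
        simpa [h0eq] using h3
      rcases prime_gq.2.2 _ _ (Ideal.mem_span_singleton.mp hmem) with hdvd | hdvd
      · exact absurd (Ideal.mem_span_singleton.mpr hdvd) hs
      · exact Ideal.mem_span_singleton.mpr hdvd
    · exfalso
      apply hs
      have : Cw 0 s = 0 := by
        by_contra hne
        exact h0T ((Set.Finite.mem_toFinset _).mpr hne)
      rw [this]
      exact zero_mem _

lemma up_main (n : ℕ) {s F : S4} (hs : s ∉ qId ⊔ Iq) (h : s * F ∈ qId ^ n ⊔ Iq) :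
    F ∈ qId ^ n ⊔ Iq := by
  rw [memJ] at h ⊢
  have hs0 : Cw 0 s ∉ Iq := by
    intro hc
    apply hs
    have hmem : s ∈ qId ^ 1 ⊔ Iq := memJ.mpr (fun k hk => by
      have : k = 0 := by omega
      subst this; exact hc)
    rwa [pow_one] at hmem
  exact main_comp n hs0 h

/-! ### Primality of `qId` -/

lemma mem_q_iff {F : S4} : F ∈ qId ↔ Cw 0 F = 0 := by
  rw [← pow_one qId, mem_qpow_iff_comp]
  constructor
  · exact fun h => h 0 one_pos
  · intro h k hk
    have : k = 0 := by omega
    subst this; exact h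

lemma qId_prime : qId.IsPrime := by
  constructor
  · intro h
    have h1 : (1 : S4) ∈ qId := h ▸ Submodule.mem_top
    rw [mem_q_iff] at h1
    have : Cw 0 (1 : S4) = 1 :=
      (isWeightedHomogeneous_one ℂ wt).weightedHomogeneousComponent_same
    rw [this] at h1
    exact one_ne_zero h1
  · intro x y hxy
    rw [mem_q_iff] at hxy ⊢
    rw [mem_q_iff]
    rw [comp_zero_mul] at hxy
    exact mul_eq_zero.mp hxy

lemma Iq_le_qId : Iq ≤ qId := by
  rw [Iq, Ideal.span_le]
  rintro x rfl
  exact sub_mem (Ideal.mul_mem_right _ _ (Ideal.subset_span (by simp)))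
    (Ideal.mul_mem_right _ _ (Ideal.subset_span (by simp)))

/-! ### Final assembly -/

lemma pIdeal_eq_map : pIdeal = Ideal.map (Ideal.Quotient.mk Iq) qId := by
  rw [pIdeal, qId, Ideal.map_span]
  congr 1
  rw [Set.image_insert_eq, Set.image_singleton]
  rfl

/-- `p` is prime, and for every `n ≥ 1` the ordinary power `pⁿ` equals the `n`-th
symbolic power of `p`: if `s ∉ p` and `s·f ∈ pⁿ` then `f ∈ pⁿ`. -/
theorem statement7 :
    pIdeal.IsPrime ∧
    ∀ n : ℕ, 1 ≤ n → ∀ f s : ConeRing, s ∉ pIdeal → s * f ∈ pIdeal ^ n →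
      f ∈ pIdeal ^ n := by
  have hker : RingHom.ker (Ideal.Quotient.mk Iq) = Iq := Ideal.mk_ker
  have hcm : ∀ J : Ideal S4,
      Ideal.comap (Ideal.Quotient.mk Iq) (Ideal.map (Ideal.Quotient.mk Iq) J) = J ⊔ Iq := by
    intro J
    rw [Ideal.comap_map_of_surjective _ Ideal.Quotient.mk_surjective,
      ← RingHom.ker_eq_comap_bot, hker]
  constructor
  · rw [pIdeal_eq_map]
    haveI := qId_prime
    exact Ideal.map_isPrime_of_surjective Ideal.Quotient.mk_surjective
      (by rw [hker]; exact Iq_le_qId)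
  · intro n _ f s hs hsf
    obtain ⟨F, rfl⟩ := Ideal.Quotient.mk_surjective f
    obtain ⟨Sp, rfl⟩ := Ideal.Quotient.mk_surjective s
    have hs' : Sp ∉ qId ⊔ Iq := by
      intro hc
      apply hs
      rw [pIdeal_eq_map]
      rw [← hcm qId] at hc
      exact hc
    have hsf' : Sp * F ∈ qId ^ n ⊔ Iq := by
      rw [← hcm (qId ^ n)]
      show Ideal.Quotient.mk Iq (Sp * F) ∈ Ideal.map (Ideal.Quotient.mk Iq) (qId ^ n)
      rw [Ideal.map_pow, map_mul]
      rw [pIdeal_eq_map] at hsf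
      exact hsf
    have hF := up_main n hs' hsf'
    have hmk := Ideal.mem_map_of_mem (Ideal.Quotient.mk Iq) hF
    rw [Ideal.map_sup, Ideal.map_quotient_self, sup_bot_eq, Ideal.map_pow] at hmk
    rw [pIdeal_eq_map]
    exact hmk
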